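/- Let p be an odd prime and k, ℓ positive integers with p ∤ k and 2k < p^ℓ, and set N = 2·k·p^ℓ − 1. Let Q be a prime such that the Jacobi symbol (Q/N) = −1. Suppose w ∈ ℤ[√Q] satisfies N(w) ≡ 1 (mod N) and w^{(N+1)/p} ≢ 1 (mod N). Then N is prime if and only if Φ_p(w^{(N+1)/p}) ≡ 0 (mod N). -/

import Mathlib

lemma stmt12_charP (Q : ℤ) (r : ℕ) :
    CharP (Zsqrtd Q ⧸ Ideal.span {((r : ℕ) : Zsqrtd Q)}) r := by
  constructor
  intro n
  rw [← map_natCast (Ideal.Quotient.mk (Ideal.span {((r : ℕ) : Zsqrtd Q)})) n,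
    Ideal.Quotient.eq_zero_iff_mem, Ideal.mem_span_singleton,
    show ((n : Zsqrtd Q)) = ((n : ℤ) : Zsqrtd Q) by push_cast; ring,
    show ((r : Zsqrtd Q)) = ((r : ℤ) : Zsqrtd Q) by push_cast; ring,
    Zsqrtd.intCast_dvd_intCast, Int.natCast_dvd_natCast]

lemma stmt12_frob (Q : ℤ) (r : ℕ) [Fact r.Prime] (hrodd : Odd r)
    (hleg : legendreSym r Q = -1) (z : Zsqrtd Q) :
    (r : Zsqrtd Q) ∣ z ^ r - star z := by
  set I : Ideal (Zsqrtd Q) := Ideal.span {((r : ℕ) : Zsqrtd Q)} with hI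
  haveI := stmt12_charP Q r
  set mk : Zsqrtd Q →+* Zsqrtd Q ⧸ I := Ideal.Quotient.mk I with hmk
  set ψ : ZMod r →+* Zsqrtd Q ⧸ I := ZMod.castHom dvd_rfl _ with hψ
  have hint : ∀ t : ℤ, (mk (t : Zsqrtd Q)) ^ r = mk (t : Zsqrtd Q) := by
    intro t
    rw [map_intCast mk t, ← map_intCast ψ t, ← map_pow, ZMod.pow_card]
  have hsq : (mk Zsqrtd.sqrtd) ^ r = - mk Zsqrtd.sqrtd := by
    have h1 : (mk Zsqrtd.sqrtd) ^ r = ((mk Zsqrtd.sqrtd) ^ 2) ^ (r / 2) * mk Zsqrtd.sqrtd := by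
      rw [← pow_mul, ← pow_succ, Nat.two_mul_div_two_add_one_of_odd hrodd]
    have h2 : (mk Zsqrtd.sqrtd) ^ 2 = mk ((Q : ℤ) : Zsqrtd Q) := by
      rw [← map_pow]
      congr 1
      rw [sq, Zsqrtd.dmuld]
    have h3 : (mk ((Q : ℤ) : Zsqrtd Q)) ^ (r / 2) = -1 := by
      rw [map_intCast mk Q, ← map_intCast ψ Q, ← map_pow, ← legendreSym.eq_pow, hleg]
      simp
    rw [h1, h2, h3]
    ring
  have key : mk (z ^ r) = mk (star z) := by
    have hz : z = (z.re : Zsqrtd Q) + Zsqrtd.sqrtd * (z.im : Zsqrtd Q) := by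
      have := @Zsqrtd.decompose Q z.re z.im
      simpa using this
    have hsz : star z = (z.re : Zsqrtd Q) + Zsqrtd.sqrtd * ((-z.im : ℤ) : Zsqrtd Q) := by
      have := @Zsqrtd.decompose Q z.re (-z.im)
      rw [← this]
      ext <;> simp [Zsqrtd.re_star, Zsqrtd.im_star]
    rw [map_pow]
    conv_lhs => rw [hz]
    rw [hsz, map_add, map_mul, add_pow_char, mul_pow, hint, hsq, hint, map_add, map_mul,
      show ((-z.im : ℤ) : Zsqrtd Q) = -((z.im : ℤ) : Zsqrtd Q) by push_cast; ring, map_neg]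
    ring
  have : z ^ r - star z ∈ I := by
    rw [← Ideal.Quotient.eq]
    exact key
  rwa [hI, Ideal.mem_span_singleton] at this

lemma stmt12_frob' (Q : ℤ) (r : ℕ) [Fact r.Prime] (hrodd : Odd r)
    (hleg : legendreSym r Q = -1) (z : Zsqrtd Q) :
    (r : Zsqrtd Q) ∣ z ^ (r + 1) - (z.norm : Zsqrtd Q) := by
  have h := (stmt12_frob Q r hrodd hleg z).mul_right z
  have he : z ^ (r + 1) - (z.norm : Zsqrtd Q) = (z ^ r - star z) * z := by
    rw [Zsqrtd.norm_eq_mul_conj]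
    ring
  rwa [he]

lemma stmt12_nat (p a ℓ m : ℕ) (hp : p.Prime) (ha : 0 < a)
    (h1 : m ∣ a * p ^ ℓ) (h2 : ¬ m ∣ a * p ^ (ℓ - 1)) : p ^ ℓ ∣ m := by
  have hm0 : m ≠ 0 := by
    rintro rfl
    simp only [Nat.zero_dvd] at h1
    exact absurd h1 (Nat.mul_pos ha (pow_pos hp.pos ℓ)).ne'
  by_contra hc
  have hj : m.factorization p ≤ ℓ - 1 := by
    have := (hp.pow_dvd_iff_le_factorization hm0).not.mp hc
    omega
  have hd : (m / p ^ m.factorization p) ∣ a := by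
    have hdm : (m / p ^ m.factorization p) ∣ a * p ^ ℓ :=
      dvd_trans (Nat.div_dvd_of_dvd (Nat.ordProj_dvd m p)) h1
    have hcop : Nat.Coprime (m / p ^ m.factorization p) (p ^ ℓ) :=
      Nat.Coprime.pow_right _ ((Nat.coprime_ordCompl hp hm0).symm)
    exact hcop.dvd_of_dvd_mul_right hdm
  apply h2
  calc m = p ^ m.factorization p * (m / p ^ m.factorization p) :=
        (Nat.ordProj_mul_ordCompl_eq_self m p).symm
    _ ∣ p ^ (ℓ - 1) * a := mul_dvd_mul (pow_dvd_pow p hj) hd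
    _ = a * p ^ (ℓ - 1) := mul_comm _ _

lemma stmt12_jacobi (Q : ℤ) : ∀ N : ℕ, jacobiSym Q N = -1 →
    ∃ r : ℕ, ∃ h : r.Prime, r ∣ N ∧ @legendreSym r ⟨h⟩ Q = -1 := by
  intro N
  induction N using Nat.strong_induction_on with
  | _ N ih =>
    intro hJ
    rcases Nat.eq_zero_or_pos N with rfl | hN0
    · simp [jacobiSym.zero_right] at hJ
    rcases eq_or_lt_of_le (show 1 ≤ N from hN0) with h1 | hN1
    · rw [← h1] at hJ; simp [jacobiSym.one_right] at hJ
    · have hq : N.minFac.Prime := Nat.minFac_prime (by omega)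
      haveI : Fact N.minFac.Prime := ⟨hq⟩
      have hqd : N.minFac ∣ N := Nat.minFac_dvd N
      have hsplit : jacobiSym Q N = legendreSym N.minFac Q * jacobiSym Q (N / N.minFac) := by
        rw [jacobiSym.legendreSym.to_jacobiSym, ← jacobiSym.mul_right' Q (Nat.Prime.ne_zero hq)
          (Nat.div_pos (Nat.le_of_dvd hN0 hqd) hq.pos).ne', Nat.mul_div_cancel' hqd]
      rcases jacobiSym.trichotomy Q N.minFac with h0 | h1 | hm1
      · rw [jacobiSym.legendreSym.to_jacobiSym, h0, zero_mul] at hsplit; omega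
      · rw [jacobiSym.legendreSym.to_jacobiSym, h1, one_mul] at hsplit
        obtain ⟨r, hr, hrd, hrl⟩ := ih (N / N.minFac)
          (Nat.div_lt_self hN0 hq.one_lt) (hsplit ▸ hJ)
        exact ⟨r, hr, hrd.trans (Nat.div_dvd_of_dvd hqd), hrl⟩
      · exact ⟨N.minFac, hq, hqd, by rw [jacobiSym.legendreSym.to_jacobiSym]; exact hm1⟩

lemma stmt12_normkey (Q : ℕ) (N : ℕ) [Fact N.Prime]
    (hleg : legendreSym N (Q : ℤ) = -1) (z : Zsqrtd (Q : ℤ))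
    (h : (N : ℤ) ∣ z.norm) : (N : Zsqrtd (Q : ℤ)) ∣ z := by
  have hQ0 : ((Q : ℤ) : ZMod N) ≠ 0 := by
    intro h0
    rw [(legendreSym.eq_zero_iff N _).mpr h0] at hleg
    norm_num at hleg
  have hz : ((z.re : ZMod N)) ^ 2 = ((Q : ℤ) : ZMod N) * ((z.im : ZMod N)) ^ 2 := by
    have h2 : ((z.norm : ZMod N)) = 0 := (ZMod.intCast_zmod_eq_zero_iff_dvd _ _).mpr h
    rw [Zsqrtd.norm_def] at h2
    push_cast at h2 ⊢
    ring_nf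
    ring_nf at h2
    linear_combination h2
  have him : ((z.im : ZMod N)) = 0 := by
    by_contra hb
    have : IsSquare (((Q : ℤ)) : ZMod N) := by
      refine ⟨(z.re : ZMod N) * ((z.im : ZMod N))⁻¹, ?_⟩
      field_simp
      push_cast at hz ⊢
      linear_combination -hz
    rw [(legendreSym.eq_one_iff N hQ0).mpr this] at hleg
    norm_num at hleg
  have hre : ((z.re : ZMod N)) = 0 := by
    have : ((z.re : ZMod N)) ^ 2 = 0 := by rw [hz, him]; ring
    exact pow_eq_zero_iff (n := 2) (by norm_num) |>.mp this
  rw [show ((N : Zsqrtd (Q:ℤ))) = (((N:ℤ) : ℤ) : Zsqrtd (Q:ℤ)) by push_cast; ring,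
    Zsqrtd.intCast_dvd]
  constructor <;> rwa [← ZMod.intCast_zmod_eq_zero_iff_dvd]

open Polynomial in
lemma stmt12_order (p : ℕ) [Fact p.Prime] (k ℓ : ℕ) (hk : 0 < k) (hℓ : 0 < ℓ)
    (Q r : ℕ) [Fact r.Prime] (hrodd : Odd r) (hrp : r ≠ p)
    (hleg : legendreSym r ((Q : ℕ) : ℤ) = -1) (w : Zsqrtd ((Q : ℕ) : ℤ))
    (hnorm : (r : ℤ) ∣ w.norm - 1)
    (hphi : (r : Zsqrtd ((Q:ℕ) : ℤ)) ∣ (aeval (w ^ (2*k*p^(ℓ-1))) (cyclotomic p ℤ))) :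
    p ^ ℓ ∣ r + 1 := by
  set I : Ideal (Zsqrtd ((Q:ℕ):ℤ)) := Ideal.span {((r : ℕ) : Zsqrtd ((Q:ℕ):ℤ))} with hI
  haveI := stmt12_charP ((Q:ℕ):ℤ) r
  set mk : Zsqrtd ((Q:ℕ):ℤ) →ₐ[ℤ] Zsqrtd ((Q:ℕ):ℤ) ⧸ I := Ideal.Quotient.mkₐ ℤ I with hmk
  have hcong : ∀ a : Zsqrtd ((Q:ℕ):ℤ), (r : Zsqrtd ((Q:ℕ):ℤ)) ∣ a → mk a = 0 := by
    intro a ha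
    rw [hmk, Ideal.Quotient.mkₐ_eq_mk, Ideal.Quotient.eq_zero_iff_mem, hI,
      Ideal.mem_span_singleton]
    exact ha
  set u := mk w with hu
  have h2 : mk (w ^ (r+1) - (w.norm : Zsqrtd ((Q:ℕ):ℤ))) = 0 :=
    hcong _ (stmt12_frob' _ r hrodd hleg w)
  obtain ⟨t, ht⟩ := hnorm
  have hnt : (w.norm : Zsqrtd ((Q:ℕ):ℤ))
      = 1 + (r : Zsqrtd ((Q:ℕ):ℤ)) * ((t : ℤ) : Zsqrtd ((Q:ℕ):ℤ)) := by
    rw [show w.norm = 1 + (r:ℤ)*t by omega]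
    push_cast
    ring
  have hu1 : u ^ (r+1) = 1 := by
    rw [map_sub, map_pow, sub_eq_zero] at h2
    rw [← hu] at h2
    rw [h2, hnt, map_add, map_mul, map_one, map_natCast,
      CharP.cast_eq_zero_iff _ r r |>.mpr dvd_rfl]
    ring
  set v := u ^ (2*k*p^(ℓ-1)) with hv
  have hphi0 : aeval v (cyclotomic p ℤ) = 0 := by
    rw [hv, hu, ← map_pow, aeval_algHom_apply]
    exact hcong _ hphi
  have heval : ∀ b : Zsqrtd ((Q:ℕ):ℤ) ⧸ I,
      aeval b (cyclotomic p ℤ) = eval b (cyclotomic p _) := by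
    intro b
    rw [aeval_def, eval₂_eq_eval_map, map_cyclotomic]
  have hv1 : v ≠ 1 := by
    intro hveq
    rw [hveq, heval, eval_one_cyclotomic_prime] at hphi0
    have : r ∣ p := (CharP.cast_eq_zero_iff _ r p).mp hphi0
    exact hrp ((Nat.prime_dvd_prime_iff_eq Fact.out Fact.out).mp this)
  have hvp : v ^ p = 1 := by
    have hid := congrArg (eval v) (cyclotomic_prime_mul_X_sub_one (Zsqrtd ((Q:ℕ):ℤ) ⧸ I) p)
    rw [eval_mul, eval_sub, eval_sub, eval_pow, eval_X, eval_one, ← heval, hphi0, zero_mul] at hid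
    rw [← sub_eq_zero, hid.symm]
  have hword : u ^ (2*k*p^ℓ) = 1 := by
    have hexp : 2*k*p^(ℓ-1)*p = 2*k*p^ℓ := by
      rw [mul_assoc, ← pow_succ, show ℓ - 1 + 1 = ℓ from by omega]
    rw [← hexp, pow_mul, ← hv, hvp]
  have hdvd1 : orderOf u ∣ 2*k*p^ℓ := orderOf_dvd_of_pow_eq_one hword
  have hndvd : ¬ orderOf u ∣ 2*k*p^(ℓ-1) := fun h => hv1 (orderOf_dvd_iff_pow_eq_one.mp h)
  have hpl : p^ℓ ∣ orderOf u :=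
    stmt12_nat p (2*k) ℓ (orderOf u) Fact.out (by omega) hdvd1 hndvd
  exact hpl.trans (orderOf_dvd_of_pow_eq_one hu1)

/-- Theorem 9.1: primality criterion for `N = 2·k·p^ℓ − 1` over `ℤ[√Q]` for a
prime `Q` with `(Q/N) = −1`. -/
theorem stmt_12 (p : ℕ) (hp : p.Prime) (hpodd : Odd p)
    (k ℓ : ℕ) (hk : 0 < k) (hℓ : 0 < ℓ)
    (hpk : ¬ p ∣ k) (hlt : 2 * k < p ^ ℓ)
    (N : ℕ) (hN : N = 2 * k * p ^ ℓ - 1)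
    (Q : ℕ) (hQ : Q.Prime) (hJ : jacobiSym (Q : ℤ) N = -1)
    (w : Zsqrtd (Q : ℤ))
    (hnorm : (N : ℤ) ∣ (w.norm - 1))
    (hw : ¬ (N : Zsqrtd (Q : ℤ)) ∣ (w ^ (2 * k * p ^ (ℓ - 1)) - 1)) :
    N.Prime ↔
      (N : Zsqrtd (Q : ℤ)) ∣
        (Polynomial.aeval (w ^ (2 * k * p ^ (ℓ - 1))) (Polynomial.cyclotomic p ℤ)) := by
  haveI hpf : Fact p.Prime := ⟨hp⟩
  have hp3 : 3 ≤ p := by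
    have h2 := hp.two_le
    have h1 := Nat.odd_iff.mp hpodd
    omega
  have hPp : p ≤ p ^ ℓ := Nat.le_self_pow hℓ.ne' p
  have hN1 : N + 1 = 2 * k * p ^ ℓ := by
    have h1 : 1 ≤ 2 * k * p ^ ℓ := Nat.one_le_iff_ne_zero.mpr
      (Nat.mul_pos (by omega) (pow_pos hp.pos ℓ)).ne'
    omega
  have hN5 : 5 ≤ N := by
    have h6 : 2 * 1 * 3 ≤ 2 * k * p ^ ℓ :=
      Nat.mul_le_mul (by omega) (le_trans (by omega) hPp)
    omega
  have hNodd : Odd N := by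
    refine ⟨k * p ^ ℓ - 1, ?_⟩
    have h2 : 2 * k * p ^ ℓ = 2 * (k * p ^ ℓ) := by ring
    omega
  have hpN : ¬ p ∣ N := by
    intro hd
    have h1 : p ∣ N + 1 := hN1 ▸ Dvd.dvd.mul_left (dvd_pow_self p hℓ.ne') (2 * k)
    have := Nat.dvd_sub h1 hd
    simp only [Nat.add_sub_cancel_left] at this
    exact absurd (Nat.le_of_dvd one_pos this) (by omega)
  have hexp : (2 * k * p ^ (ℓ - 1)) * p = N + 1 := by
    rw [mul_assoc, ← pow_succ, show ℓ - 1 + 1 = ℓ from by omega, hN1]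
  constructor
  · -- N prime → Φ_p(x) ≡ 0
    intro hNp
    haveI : Fact N.Prime := ⟨hNp⟩
    have hlegN : legendreSym N (Q : ℤ) = -1 := by
      rw [jacobiSym.legendreSym.to_jacobiSym]; exact hJ
    have h1 := stmt12_frob' ((Q:ℕ):ℤ) N hNodd hlegN w
    have h3 : (N : Zsqrtd ((Q:ℕ):ℤ)) ∣ ((w.norm : Zsqrtd ((Q:ℕ):ℤ)) - 1) := by
      obtain ⟨t, ht⟩ := hnorm
      refine ⟨((t : ℤ) : Zsqrtd ((Q:ℕ):ℤ)), ?_⟩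
      have := congrArg (fun y : ℤ => ((y : ℤ) : Zsqrtd ((Q:ℕ):ℤ))) ht
      push_cast at this
      convert this using 2 <;> push_cast <;> ring
    have h2 : (N : Zsqrtd ((Q:ℕ):ℤ)) ∣ w ^ (N + 1) - 1 := by
      have he : w ^ (N+1) - 1
          = (w ^ (N+1) - (w.norm : Zsqrtd ((Q:ℕ):ℤ))) + ((w.norm : Zsqrtd ((Q:ℕ):ℤ)) - 1) := by
        ring
      rw [he]
      exact dvd_add h1 h3
    set x := w ^ (2 * k * p ^ (ℓ - 1)) with hx
    have hxp : (N : Zsqrtd ((Q:ℕ):ℤ)) ∣ x ^ p - 1 := by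
      rw [hx, ← pow_mul, hexp]
      exact h2
    have hid : x ^ p - 1 = (Polynomial.aeval x (Polynomial.cyclotomic p ℤ)) * (x - 1) := by
      have hev := congrArg (Polynomial.eval x)
        (Polynomial.cyclotomic_prime_mul_X_sub_one (Zsqrtd ((Q:ℕ):ℤ)) p)
      rw [Polynomial.eval_mul, Polynomial.eval_sub, Polynomial.eval_sub, Polynomial.eval_pow,
        Polynomial.eval_X, Polynomial.eval_one] at hev
      rw [← hev, Polynomial.aeval_def, Polynomial.eval₂_eq_eval_map, Polynomial.map_cyclotomic]
    rw [hid] at hxp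
    obtain ⟨c, hc⟩ := hxp
    have hnormsplit : (Polynomial.aeval x (Polynomial.cyclotomic p ℤ)).norm * (x - 1).norm
        = (N : ℤ) * ((N : ℤ) * c.norm) := by
      rw [← Zsqrtd.norm_mul, hc, Zsqrtd.norm_mul, Zsqrtd.norm_natCast]
      ring
    have hNdvd2 : (N : ℤ) ∣ (Polynomial.aeval x (Polynomial.cyclotomic p ℤ)).norm
        * (x - 1).norm := ⟨(N : ℤ) * c.norm, hnormsplit⟩
    have hNZp : Prime (N : ℤ) := Nat.prime_iff_prime_int.mp hNp
    rcases hNZp.dvd_mul.mp hNdvd2 with hA | hB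
    · exact stmt12_normkey Q N hlegN _ hA
    · exact absurd (stmt12_normkey Q N hlegN _ hB) hw
  · -- Φ_p(x) ≡ 0 → N prime
    intro hdvd
    obtain ⟨r, hr, hrd, hrleg⟩ := stmt12_jacobi (Q : ℤ) N hJ
    haveI : Fact r.Prime := ⟨hr⟩
    have hrodd : Odd r := hr.odd_of_ne_two (by
      rintro rfl
      rw [Nat.odd_iff] at hNodd
      omega)
    have hrp : r ≠ p := fun h => hpN (h ▸ hrd)
    have hrnorm : (r : ℤ) ∣ w.norm - 1 := dvd_trans (Int.natCast_dvd_natCast.mpr hrd) hnorm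
    have hrphi : (r : Zsqrtd ((Q:ℕ):ℤ)) ∣
        (Polynomial.aeval (w ^ (2 * k * p ^ (ℓ - 1))) (Polynomial.cyclotomic p ℤ)) :=
      dvd_trans (Nat.cast_dvd_cast hrd) hdvd
    have hplr := stmt12_order p k ℓ hk hℓ Q r hrodd hrp hrleg w hrnorm hrphi
    obtain ⟨m, hm⟩ := hrd
    have hP1 : 3 ≤ p ^ ℓ := by omega
    have hrge : p ^ ℓ ≤ r + 1 := Nat.le_of_dvd (by omega) hplr
    have h5 : (r + 1) * m = N + m := by rw [hm]; ring
    have hNd : p ^ ℓ ∣ N + 1 := by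
      rw [hN1]; exact Dvd.dvd.mul_left dvd_rfl (2 * k)
    have h6 : p ^ ℓ ∣ (r + 1) * m - (N + 1) := Nat.dvd_sub (Dvd.dvd.mul_right hplr m) hNd
    rw [h5, show N + m - (N + 1) = m - 1 from by omega] at h6
    rcases Nat.lt_or_ge m 2 with hm2 | hm2
    · interval_cases m
      · simp at hm; omega
      · rw [mul_one] at hm; exact hm ▸ hr
    · exfalso
      have hm1 : p ^ ℓ ≤ m - 1 := Nat.le_of_dvd (by omega) h6
      have hgeN : (p ^ ℓ - 1) * (p ^ ℓ + 1) ≤ r * m :=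
        Nat.mul_le_mul (by omega) (by omega)
      rw [← hm] at hgeN
      have hEq : (p ^ ℓ - 1) * (p ^ ℓ + 1) = (p ^ ℓ - 1) * p ^ ℓ + (p ^ ℓ - 1) := by
        rw [Nat.mul_add, mul_one]
      have hle : N + 1 ≤ (p ^ ℓ - 1) * p ^ ℓ := by
        rw [hN1]; exact Nat.mul_le_mul_right _ (by omega)
      have hfinal : N + 1 + (p ^ ℓ - 1) ≤ N :=
        le_trans (Nat.add_le_add_right hle _) (le_trans (le_of_eq hEq.symm) hgeN)
      omega
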